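/- arXiv:1911.06545 — 4 statements merged into one kernel-verified Lean document; each statement's English description precedes it below -/
import Mathlib

section
/- Define ξ_n = Σ_{k=1}^n (Y_{k−1} − c v_k) and T* = min{1 ≤ k ≤ N+1 : Y_k ≥ l_k(c)} (with Y_{N+1} := Y_N and l_{N+1}(c) = 0, so T* ≤ N+1). Then for every 1 ≤ n ≤ N, on the event {T* > n} one has ME(ξ_{T*} − ξ_n | 𝔉_n) = Y_n − l_n(c) < 0 μ-a.e. -/
open MeasureTheory Finset

/-- With `ξ_n = ∑_{k=1}^n (Y_{k−1} − c v_k)` and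
`T* = min{1 ≤ k ≤ N+1 : Y_k ≥ l_k(c)}` (where `Y_{N+1} := Y_N`, `l_{N+1}(c) = 0`),
for every `1 ≤ n ≤ N`, on `{T* > n}` one has
`ME(ξ_{T*} − ξ_n | ℱ_n) = Y_n − l_n(c) < 0` μ-a.e. -/
theorem stmt_8 {Ω : Type*} {m0 : MeasurableSpace Ω} (μ : Measure Ω) [IsFiniteMeasure μ]
    (N : ℕ) (ℱ : MeasureTheory.Filtration ℕ m0)
    (c : ℝ) (hc : 0 < c)
    (v Y : ℕ → Ω → ℝ)
    (hv0 : ∀ k ω, 0 ≤ v k ω) (hvmeas : ∀ k, Measurable[ℱ k] (v (k + 1)))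
    (hvint : ∀ k, Integrable (v k) μ)
    (hY0 : Y 0 = 0) (hYpos : ∀ k ω, 0 ≤ Y k ω)
    (hYmeas : ∀ k, Measurable[ℱ k] (Y k)) (hYint : ∀ k, Integrable (Y k) μ)
    (hYN1 : Y (N + 1) = Y N)
    (l : ℕ → Ω → ℝ)
    (hlN1 : l (N + 1) = 0)
    (hlN : l N = fun ω => c * v (N + 1) ω)
    (hlrec : ∀ k < N, l k = fun ω =>
      c * v (k + 1) ω + (μ[fun ω' => max (l (k + 1) ω' - Y (k + 1) ω') 0 | ℱ k]) ω)
    (ξ : ℕ → Ω → ℝ)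
    (hξ : ∀ n, ξ n = fun ω => ∑ k ∈ Finset.Icc 1 n, (Y (k - 1) ω - c * v k ω))
    (Tstar : Ω → ℕ)
    (hTstar : ∀ ω, Tstar ω = sInf {k | 1 ≤ k ∧ k ≤ N + 1 ∧ l k ω ≤ Y k ω})
    (hTne : ∀ ω, {k | 1 ≤ k ∧ k ≤ N + 1 ∧ l k ω ≤ Y k ω}.Nonempty)
    (hξTint : Integrable (fun ω => ξ (Tstar ω) ω) μ) :
    ∀ n, 1 ≤ n → n ≤ N →
      ∀ᵐ ω ∂μ, n < Tstar ω →
        ((μ[fun ω' => ξ (Tstar ω') ω' - ξ n ω' | ℱ n]) ω = Y n ω - l n ω ∧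
          Y n ω - l n ω < 0) := by
  -- basic facts about Tstar
  have hSmem : ∀ ω, 1 ≤ Tstar ω ∧ Tstar ω ≤ N + 1 ∧ l (Tstar ω) ω ≤ Y (Tstar ω) ω := by
    intro ω
    have h := Nat.sInf_mem (hTne ω)
    rw [← hTstar ω] at h
    exact h
  have hTle : ∀ ω (j : ℕ), 1 ≤ j → j ≤ N + 1 → l j ω ≤ Y j ω → Tstar ω ≤ j := by
    intro ω j h1 h2 h3
    rw [hTstar]
    exact Nat.sInf_le ⟨h1, h2, h3⟩
  have hlt : ∀ ω k, k < Tstar ω → ∀ j, 1 ≤ j → j ≤ k → j ≤ N + 1 → Y j ω < l j ω := by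
    intro ω k hk j h1 hjk hjN
    by_contra h
    push_neg at h
    have := hTle ω j h1 hjN h
    omega
  -- measurability and integrability of l
  have hlmeas : ∀ j, j ≤ N + 1 → Measurable[ℱ j] (l j) := by
    intro j hj
    rcases lt_trichotomy j N with h | h | h
    · rw [hlrec j h]
      exact ((hvmeas j).const_mul c).add stronglyMeasurable_condExp.measurable
    · subst h; rw [hlN]
      exact (hvmeas j).const_mul c
    · have hj1 : j = N + 1 := by omega
      subst hj1; rw [hlN1]
      exact measurable_const
  have hlint : ∀ j, j ≤ N + 1 → Integrable (l j) μ := by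
    intro j hj
    rcases lt_trichotomy j N with h | h | h
    · rw [hlrec j h]
      exact ((hvint (j + 1)).const_mul c).add integrable_condExp
    · subst h; rw [hlN]
      exact (hvint (j + 1)).const_mul c
    · have hj1 : j = N + 1 := by omega
      subst hj1; rw [hlN1]
      exact integrable_zero _ _ _
  -- the event {k < Tstar} is ℱ k measurable
  have hAset : ∀ k, k ≤ N → {ω | k < Tstar ω} = ⋂ j ∈ Set.Icc 1 k, {ω | Y j ω < l j ω} := by
    intro k hk
    ext ω
    simp only [Set.mem_setOf_eq, Set.mem_iInter, Set.mem_Icc, and_imp]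
    constructor
    · intro h j h1 h2
      exact hlt ω k h j h1 h2 (by omega)
    · intro h
      by_contra hcon
      push_neg at hcon
      have h1 := (hSmem ω).1
      have hj := h (Tstar ω) h1 hcon
      exact absurd (hSmem ω).2.2 (not_le.mpr hj)
  have hAmeas : ∀ k, k ≤ N → MeasurableSet[ℱ k] {ω | k < Tstar ω} := by
    intro k hk
    rw [hAset k hk]
    refine MeasurableSet.biInter (Set.to_countable _) fun j hj => ?_
    have hjk : j ≤ k := hj.2
    exact measurableSet_lt ((hYmeas j).mono (ℱ.mono hjk) le_rfl)
      ((hlmeas j (by omega)).mono (ℱ.mono hjk) le_rfl)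
  -- step formula for ξ
  have hξstep : ∀ k ω, ξ (k + 1) ω = ξ k ω + (Y k ω - c * v (k + 1) ω) := by
    intro k ω
    simp only [hξ]
    rw [Finset.sum_Icc_succ_top (by omega : (1 : ℕ) ≤ k + 1)]
    simp
  have hξint : ∀ k, Integrable (ξ k) μ := by
    intro k
    rw [hξ]
    exact integrable_finset_sum _ fun i _ => (hYint _).sub ((hvint i).const_mul c)
  -- the key backward induction
  have key : ∀ d k, N = k + d →
      μ[Set.indicator {ω | k < Tstar ω} (fun ω => ξ (Tstar ω) ω - ξ k ω) | ℱ k]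
        =ᵐ[μ] Set.indicator {ω | k < Tstar ω} (fun ω => Y k ω - l k ω) := by
    intro d
    induction d with
    | zero =>
      intro k hk
      have hkN : k = N := by omega
      subst hkN
      have heq : Set.indicator {ω | k < Tstar ω} (fun ω => ξ (Tstar ω) ω - ξ k ω)
          = Set.indicator {ω | k < Tstar ω} (fun ω => Y k ω - l k ω) := by
        funext ω
        by_cases hω : ω ∈ {ω | k < Tstar ω}
        · rw [Set.indicator_of_mem hω, Set.indicator_of_mem hω]
          have hT : Tstar ω = k + 1 := by
            have h1 := (hSmem ω).2.1
            have h2 : k < Tstar ω := hω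
            omega
          rw [hT, hξstep k ω]
          simp only [hlN]
          ring
        · rw [Set.indicator_of_notMem hω, Set.indicator_of_notMem hω]
      rw [heq, condExp_of_stronglyMeasurable (ℱ.le k)
        (f := Set.indicator {ω | k < Tstar ω} (fun ω => Y k ω - l k ω))
        (((hYmeas k).sub (hlmeas k (by omega))).stronglyMeasurable.indicator
          (hAmeas k le_rfl))
        (((hYint k).sub (hlint k (by omega))).indicator (ℱ.le k _ (hAmeas k le_rfl)))]
    | succ d ih =>
      intro k hk
      have hkN : k < N := by omega
      have IH := ih (k + 1) (by omega)
      have hsub : {ω | k + 1 < Tstar ω} ⊆ {ω | k < Tstar ω} := fun ω h => by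
        simp only [Set.mem_setOf_eq] at *; omega
      -- split the indicator
      have hsplit : Set.indicator {ω | k < Tstar ω} (fun ω => ξ (Tstar ω) ω - ξ k ω)
          = (Set.indicator {ω | k < Tstar ω} (fun ω => Y k ω - c * v (k + 1) ω))
            + (Set.indicator {ω | k + 1 < Tstar ω} (fun ω => ξ (Tstar ω) ω - ξ (k + 1) ω)) := by
        funext ω
        simp only [Pi.add_apply]
        by_cases hωB : ω ∈ {ω | k + 1 < Tstar ω}
        · have hωA : ω ∈ {ω | k < Tstar ω} := hsub hωB
          rw [Set.indicator_of_mem hωA, Set.indicator_of_mem hωA, Set.indicator_of_mem hωB,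
            hξstep k ω]
          ring
        · by_cases hωA : ω ∈ {ω | k < Tstar ω}
          · have hT : Tstar ω = k + 1 := by
              have h2 : k < Tstar ω := hωA
              have h3 : ¬ (k + 1 < Tstar ω) := hωB
              omega
            rw [Set.indicator_of_mem hωA, Set.indicator_of_mem hωA,
              Set.indicator_of_notMem hωB, hT, hξstep k ω]
            ring
          · rw [Set.indicator_of_notMem hωA, Set.indicator_of_notMem hωA,
              Set.indicator_of_notMem hωB]
            ring
      have hint1 : Integrable
          (Set.indicator {ω | k < Tstar ω} (fun ω => Y k ω - c * v (k + 1) ω)) μ :=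
        ((hYint k).sub ((hvint (k + 1)).const_mul c)).indicator (ℱ.le k _ (hAmeas k hkN.le))
      have hint2 : Integrable
          (Set.indicator {ω | k + 1 < Tstar ω} (fun ω => ξ (Tstar ω) ω - ξ (k + 1) ω)) μ :=
        (hξTint.sub (hξint (k + 1))).indicator (ℱ.le (k + 1) _ (hAmeas (k + 1) hkN))
      have hmaxint : Integrable (fun ω' => max (l (k + 1) ω' - Y (k + 1) ω') 0) μ :=
        ((hlint (k + 1) (by omega)).sub (hYint (k + 1))).pos_part
      -- identity turning the next-step indicator into the conditional-expectation form
      have hneg : Set.indicator {ω | k + 1 < Tstar ω} (fun ω => Y (k + 1) ω - l (k + 1) ω)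
          = Set.indicator {ω | k < Tstar ω}
              (-(fun ω' => max (l (k + 1) ω' - Y (k + 1) ω') 0)) := by
        funext ω
        by_cases hωB : ω ∈ {ω | k + 1 < Tstar ω}
        · have hωA : ω ∈ {ω | k < Tstar ω} := hsub hωB
          rw [Set.indicator_of_mem hωB, Set.indicator_of_mem hωA]
          have hYl : Y (k + 1) ω < l (k + 1) ω :=
            hlt ω (k + 1) hωB (k + 1) (by omega) le_rfl (by omega)
          simp only [Pi.neg_apply]
          rw [max_eq_left (by linarith)]
          ring
        · by_cases hωA : ω ∈ {ω | k < Tstar ω}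
          · have hT : Tstar ω = k + 1 := by
              have h2 : k < Tstar ω := hωA
              have h3 : ¬ (k + 1 < Tstar ω) := hωB
              omega
            have hle : l (k + 1) ω ≤ Y (k + 1) ω := by
              have h := (hSmem ω).2.2
              rw [hT] at h
              exact h
            rw [Set.indicator_of_notMem hωB, Set.indicator_of_mem hωA]
            simp only [Pi.neg_apply]
            rw [max_eq_right (by linarith)]
            ring
          · rw [Set.indicator_of_notMem hωB, Set.indicator_of_notMem hωA]
      -- assemble
      have step1 : μ[Set.indicator {ω | k < Tstar ω} (fun ω => ξ (Tstar ω) ω - ξ k ω) | ℱ k]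
          =ᵐ[μ] (Set.indicator {ω | k < Tstar ω} (fun ω => Y k ω - c * v (k + 1) ω))
            + μ[Set.indicator {ω | k + 1 < Tstar ω}
                (fun ω => ξ (Tstar ω) ω - ξ (k + 1) ω) | ℱ k] := by
        rw [hsplit]
        refine (condExp_add hint1 hint2 (ℱ k)).trans ?_
        rw [condExp_of_stronglyMeasurable (ℱ.le k)
          (f := Set.indicator {ω | k < Tstar ω} (fun ω => Y k ω - c * v (k + 1) ω))
          (((hYmeas k).sub ((hvmeas k).const_mul c)).stronglyMeasurable.indicator
            (hAmeas k hkN.le)) hint1]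
      have step2 : μ[Set.indicator {ω | k + 1 < Tstar ω}
            (fun ω => ξ (Tstar ω) ω - ξ (k + 1) ω) | ℱ k]
          =ᵐ[μ] Set.indicator {ω | k < Tstar ω}
            (μ[-(fun ω' => max (l (k + 1) ω' - Y (k + 1) ω') 0) | ℱ k]) := by
        refine ((condExp_condExp_of_le (ℱ.mono (Nat.le_succ k)) (ℱ.le (k + 1))).symm.trans
          ?_)
        refine (condExp_congr_ae IH).trans ?_
        rw [hneg]
        exact condExp_indicator hmaxint.neg (hAmeas k hkN.le)
      refine step1.trans ((Filter.EventuallyEq.rfl.add step2).trans ?_)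
      filter_upwards [condExp_neg (fun ω' => max (l (k + 1) ω' - Y (k + 1) ω') 0)
        (m := ℱ k) (μ := μ)] with ω hω
      by_cases hωA : ω ∈ {ω | k < Tstar ω}
      · rw [Pi.add_apply, Set.indicator_of_mem hωA, Set.indicator_of_mem hωA, Set.indicator_of_mem hωA, hω]
        simp only [Pi.neg_apply, hlrec k hkN]
        ring
      · rw [Pi.add_apply, Set.indicator_of_notMem hωA, Set.indicator_of_notMem hωA,
          Set.indicator_of_notMem hωA]
        ring
  -- conclusion
  intro n hn1 hnN
  have hkey := key (N - n) n (by omega)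
  have hind := condExp_indicator (μ := μ) (m := ℱ n)
    (f := fun ω => ξ (Tstar ω) ω - ξ n ω) (hξTint.sub (hξint n)) (hAmeas n hnN)
  filter_upwards [hkey, hind] with ω h1 h2
  intro hn
  have hωA : ω ∈ {ω | n < Tstar ω} := hn
  constructor
  · have h3 := h2.symm.trans h1
    rw [Set.indicator_of_mem hωA, Set.indicator_of_mem hωA] at h3
    exact h3
  · have hYl := hlt ω n hn n hn1 le_rfl (by omega)
    linarith
end

section
/- With notation as above, for any stopping time T ∈ 𝔗_N (i.e., 1 ≤ T ≤ N+1 and {T ≤ n} ∈ 𝔉_n), on the event {T* = n, T > n} one has ME(ξ_T − ξ_n | 𝔉_n) ≥ Y_n − l_n(c) ≥ 0 μ-a.e., for every 1 ≤ n ≤ N. -/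
open MeasureTheory Finset

/-- With `ξ_n = ∑_{k=1}^n (Y_{k−1} − c v_k)` and `T* = min{1 ≤ k ≤ N+1 : Y_k ≥ l_k(c)}`,
for any stopping time `T ∈ 𝔗_N`, on `{T* = n, T > n}` one has
`ME(ξ_T − ξ_n | ℱ_n) ≥ Y_n − l_n(c) ≥ 0` μ-a.e., for every `1 ≤ n ≤ N`. -/
theorem stmt_9 {Ω : Type*} {m0 : MeasurableSpace Ω} (μ : Measure Ω) [IsFiniteMeasure μ]
    (N : ℕ) (ℱ : MeasureTheory.Filtration ℕ m0)
    (c : ℝ) (hc : 0 < c)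
    (v Y : ℕ → Ω → ℝ)
    (hv0 : ∀ k ω, 0 ≤ v k ω) (hvmeas : ∀ k, Measurable[ℱ k] (v (k + 1)))
    (hvint : ∀ k, Integrable (v k) μ)
    (hY0 : Y 0 = 0) (hYpos : ∀ k ω, 0 ≤ Y k ω)
    (hYmeas : ∀ k, Measurable[ℱ k] (Y k)) (hYint : ∀ k, Integrable (Y k) μ)
    (hYN1 : Y (N + 1) = Y N)
    (l : ℕ → Ω → ℝ)
    (hlN1 : l (N + 1) = 0)
    (hlN : l N = fun ω => c * v (N + 1) ω)
    (hlrec : ∀ k < N, l k = fun ω =>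
      c * v (k + 1) ω + (μ[fun ω' => max (l (k + 1) ω' - Y (k + 1) ω') 0 | ℱ k]) ω)
    (ξ : ℕ → Ω → ℝ)
    (hξ : ∀ n, ξ n = fun ω => ∑ k ∈ Finset.Icc 1 n, (Y (k - 1) ω - c * v k ω))
    (Tstar : Ω → ℕ)
    (hTstar : ∀ ω, Tstar ω = sInf {k | 1 ≤ k ∧ k ≤ N + 1 ∧ l k ω ≤ Y k ω})
    (hTne : ∀ ω, {k | 1 ≤ k ∧ k ≤ N + 1 ∧ l k ω ≤ Y k ω}.Nonempty)
    (T : Ω → ℕ) (hT1 : ∀ ω, 1 ≤ T ω) (hT2 : ∀ ω, T ω ≤ N + 1)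
    (hTstop : ∀ n, MeasurableSet[ℱ n] {ω | T ω ≤ n})
    (hξTint : Integrable (fun ω => ξ (T ω) ω) μ) :
    ∀ n, 1 ≤ n → n ≤ N →
      ∀ᵐ ω ∂μ, (Tstar ω = n ∧ n < T ω) →
        (Y n ω - l n ω ≤ (μ[fun ω' => ξ (T ω') ω' - ξ n ω' | ℱ n]) ω ∧
          0 ≤ Y n ω - l n ω) := by
  classical
  -- the events A m = {T > m}
  set A : ℕ → Set Ω := fun m => {ω | m < T ω} with hA_def
  have hA : ∀ m, MeasurableSet[ℱ m] (A m) := by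
    intro m
    have h1 : A m = {ω | T ω ≤ m}ᶜ := by
      ext ω; simp [hA_def, Set.mem_compl_iff, not_le]
    rw [h1]; exact (hTstop m).compl
  have hA0 : ∀ m, MeasurableSet (A m) := fun m => (ℱ.le m) _ (hA m)
  -- basic step identity for ξ
  have hstep : ∀ m (ω : Ω), ξ (m + 1) ω - ξ m ω = Y m ω - c * v (m + 1) ω := by
    intro m ω
    rw [hξ (m + 1), hξ m]
    simp only
    rw [Finset.sum_Icc_succ_top (by omega : 1 ≤ m + 1)]
    simp
  -- integrability of ξ
  have hξint : ∀ k, Integrable (ξ k) μ := by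
    intro k
    rw [hξ k]
    exact integrable_finset_sum _ fun i _ => (hYint (i - 1)).sub ((hvint i).const_mul c)
  -- integrability of l
  have hlint : ∀ d k, k + d = N + 1 → Integrable (l k) μ := by
    intro d
    induction d with
    | zero =>
      intro k hk
      have : k = N + 1 := by omega
      subst this
      rw [hlN1]
      exact integrable_zero _ _ _
    | succ d ih =>
      intro k hk
      rcases eq_or_lt_of_le (show k ≤ N by omega) with hkn | hkn
      · subst hkn
        rw [hlN]
        exact (hvint (k + 1)).const_mul c
      · rw [hlrec k hkn]
        exact (((hvint (k + 1)).const_mul c)).add integrable_condExp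
  have hlint' : ∀ k, k ≤ N + 1 → Integrable (l k) μ := fun k hk =>
    hlint (N + 1 - k) k (by omega)
  -- the key inequality, by downward induction
  have key : ∀ d m, m + d = N →
      (A m).indicator (fun ω => Y m ω - l m ω) ≤ᵐ[μ]
        μ[(A m).indicator (fun ω => ξ (T ω) ω - ξ m ω) | ℱ m] := by
    intro d
    induction d with
    | zero =>
      intro m hm
      have hmN : m = N := by omega
      subst hmN
      have hfun : (A m).indicator (fun ω => ξ (T ω) ω - ξ m ω)
          = (A m).indicator (fun ω => Y m ω - l m ω) := by
        funext ω
        by_cases hω : ω ∈ A m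
        · rw [Set.indicator_of_mem hω, Set.indicator_of_mem hω]
          have hT : T ω = m + 1 := by
            have := hT2 ω; have : m < T ω := hω; omega
          rw [hT, hstep m ω, hlN]
        · rw [Set.indicator_of_notMem hω, Set.indicator_of_notMem hω]
      have hmeas : StronglyMeasurable[ℱ m] ((A m).indicator fun ω => Y m ω - l m ω) := by
        rw [hlN]
        exact (((hYmeas m).sub (measurable_const.mul (hvmeas m))).stronglyMeasurable).indicator
          (hA m)
      have hint : Integrable ((A m).indicator fun ω => Y m ω - l m ω) μ :=
        ((hYint m).sub (hlint' m (by omega))).indicator (hA0 m)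
      rw [hfun, condExp_of_stronglyMeasurable (ℱ.le m) hmeas hint]
    | succ d ih =>
      intro m hm
      have hmN : m < N := by omega
      have IH := ih (m + 1) (by omega)
      set F : Ω → ℝ := fun ω => ξ (T ω) ω - ξ m ω with hF
      set g : Ω → ℝ := (A m).indicator (fun ω => Y m ω - c * v (m + 1) ω) with hg
      set h1 : Ω → ℝ := (A (m + 1)).indicator (fun ω => ξ (T ω) ω - ξ (m + 1) ω) with hh1
      set q : Ω → ℝ := fun ω' => max (l (m + 1) ω' - Y (m + 1) ω') 0 with hq
      have hsub : A (m + 1) ⊆ A m := by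
        intro ω hω
        have : m + 1 < T ω := hω
        show m < T ω
        omega
      -- decomposition
      have hdecomp : (A m).indicator F = g + h1 := by
        funext ω
        simp only [Pi.add_apply, hF, hg, hh1]
        by_cases hω1 : ω ∈ A (m + 1)
        · have hω : ω ∈ A m := hsub hω1
          rw [Set.indicator_of_mem hω, Set.indicator_of_mem hω, Set.indicator_of_mem hω1]
          have := hstep m ω
          linarith
        · by_cases hω : ω ∈ A m
          · have hT : T ω = m + 1 := by
              have h2 : m < T ω := hω
              have h3 : ¬ (m + 1 < T ω) := hω1
              omega
            rw [Set.indicator_of_mem hω, Set.indicator_of_mem hω,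
              Set.indicator_of_notMem hω1]
            have := hstep m ω
            rw [hT]
            linarith
          · rw [Set.indicator_of_notMem hω, Set.indicator_of_notMem hω,
              Set.indicator_of_notMem hω1]
            simp
      -- integrability
      have hgint : Integrable g μ :=
        ((hYint m).sub ((hvint (m + 1)).const_mul c)).indicator (hA0 m)
      have hh1int : Integrable h1 μ :=
        (hξTint.sub (hξint (m + 1))).indicator (hA0 (m + 1))
      have hqint : Integrable q μ :=
        ((hlint' (m + 1) (by omega)).sub (hYint (m + 1))).pos_part
      -- condexp of g
      have hgmeas : StronglyMeasurable[ℱ m] g :=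
        (((hYmeas m).sub (measurable_const.mul (hvmeas m))).stronglyMeasurable).indicator (hA m)
      have e2 : μ[g | ℱ m] = g := condExp_of_stronglyMeasurable (ℱ.le m) hgmeas hgint
      -- condexp additivity
      have e1 : μ[(A m).indicator F | ℱ m] =ᵐ[μ] μ[g | ℱ m] + μ[h1 | ℱ m] := by
        rw [hdecomp]
        exact condExp_add hgint hh1int _
      -- h1 is supported on A m
      have hh1supp : (A m).indicator h1 = h1 := by
        funext ω
        by_cases hω : ω ∈ A m
        · rw [Set.indicator_of_mem hω]
        · rw [Set.indicator_of_notMem hω, hh1,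
            Set.indicator_of_notMem (fun h => hω (hsub h))]
      have e3 : μ[h1 | ℱ m] =ᵐ[μ] (A m).indicator (μ[h1 | ℱ m]) := by
        have := condExp_indicator hh1int (hA m)
        rw [hh1supp] at this
        exact this
      -- tower property
      have e4 : μ[μ[h1 | ℱ (m + 1)] | ℱ m] =ᵐ[μ] μ[h1 | ℱ m] :=
        condExp_condExp_of_le (ℱ.mono (Nat.le_succ m)) (ℱ.le (m + 1))
      -- lower bound for μ[h1 | ℱ (m+1)]
      have e6 : ∀ ω, -(q ω) ≤ (A (m + 1)).indicator (fun ω => Y (m + 1) ω - l (m + 1) ω) ω := by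
        intro ω
        by_cases hω : ω ∈ A (m + 1)
        · rw [Set.indicator_of_mem hω]
          have h1 : l (m + 1) ω - Y (m + 1) ω ≤ q ω := le_max_left _ _
          linarith
        · rw [Set.indicator_of_notMem hω]
          have h2 : (0 : ℝ) ≤ q ω := le_max_right _ _
          linarith
      have h6 : (fun ω => -(q ω)) ≤ᵐ[μ]
          (A (m + 1)).indicator (fun ω => Y (m + 1) ω - l (m + 1) ω) :=
        Filter.Eventually.of_forall e6
      have hq_le : (fun ω => -(q ω)) ≤ᵐ[μ] μ[h1 | ℱ (m + 1)] := h6.trans IH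
      have hmono : μ[fun ω => -(q ω) | ℱ m] ≤ᵐ[μ] μ[μ[h1 | ℱ (m + 1)] | ℱ m] :=
        condExp_mono hqint.neg integrable_condExp hq_le
      have hneg : μ[fun ω => -(q ω) | ℱ m] =ᵐ[μ] -(μ[q | ℱ m]) := condExp_neg q _
      have hge : ∀ᵐ ω ∂μ, -((μ[q | ℱ m]) ω) ≤ (μ[h1 | ℱ m]) ω := by
        filter_upwards [hmono, e4, hneg] with ω h1' h2' h3'
        calc -((μ[q | ℱ m]) ω) = (μ[fun ω => -(q ω) | ℱ m]) ω := by
              rw [h3']; simp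
          _ ≤ (μ[μ[h1 | ℱ (m + 1)] | ℱ m]) ω := h1'
          _ = (μ[h1 | ℱ m]) ω := h2'
      -- conclude
      filter_upwards [e1, e3, hge] with ω he1 he3 hge'
      rw [he1, Pi.add_apply, e2, hg]
      by_cases hω : ω ∈ A m
      · rw [Set.indicator_of_mem hω, Set.indicator_of_mem hω]
        have hl : l m ω = c * v (m + 1) ω + (μ[q | ℱ m]) ω := by
          rw [hlrec m hmN]
        linarith
      · rw [Set.indicator_of_notMem hω, Set.indicator_of_notMem hω]
        have : (μ[h1 | ℱ m]) ω = 0 := by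
          rw [he3, Set.indicator_of_notMem hω]
        linarith
  -- assemble the final statement
  intro n hn1 hnN
  have hkey := key (N - n) n (by omega)
  have hFint : Integrable (fun ω' => ξ (T ω') ω' - ξ n ω') μ := hξTint.sub (hξint n)
  have hind := condExp_indicator hFint (hA n)
  filter_upwards [hkey, hind] with ω hkeyω hindω
  rintro ⟨hTs, hTn⟩
  have hωA : ω ∈ A n := hTn
  constructor
  · have s1 : (A n).indicator (fun ω => Y n ω - l n ω) ω = Y n ω - l n ω :=
      Set.indicator_of_mem hωA _
    have s2 : (A n).indicator (μ[fun ω' => ξ (T ω') ω' - ξ n ω' | ℱ n]) ω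
        = (μ[fun ω' => ξ (T ω') ω' - ξ n ω' | ℱ n]) ω := Set.indicator_of_mem hωA _
    rw [← s2, ← hindω, ← s1]
    exact hkeyω
  · have hmem := Nat.sInf_mem (hTne ω)
    rw [← hTstar ω, hTs] at hmem
    have := hmem.2.2
    linarith
end

section
/- The optimal stopping value at time 0 satisfies ∫ ξ_{T*(c)} dμ = −∫ l_0(c) dμ, i.e., the minimal value of ∫ ξ_T dμ over all stopping times T ∈ 𝔗_N equals minus the μ-expectation of the time-0 control limit l_0(c). -/
open MeasureTheory Finset

/-- The optimal stopping value at time 0: `∫ ξ_{T*(c)} dμ = −∫ l_0(c) dμ`, where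
`ξ_n = ∑_{k=1}^n (Y_{k−1} − c v_k)` and `T*(c) = min{1 ≤ k ≤ N+1 : Y_k ≥ l_k(c)}`
with control limits given by the backward recursion under a finite measure `μ`. -/
theorem stmt_11 {Ω : Type*} {m0 : MeasurableSpace Ω} (μ : Measure Ω) [IsFiniteMeasure μ]
    (N : ℕ) (ℱ : MeasureTheory.Filtration ℕ m0)
    (c : ℝ) (hc : 0 < c)
    (v Y : ℕ → Ω → ℝ)
    (hv0 : ∀ k ω, 0 ≤ v k ω) (hvmeas : ∀ k, Measurable[ℱ k] (v (k + 1)))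
    (hvint : ∀ k, Integrable (v k) μ)
    (hY0 : Y 0 = 0) (hYpos : ∀ k ω, 0 ≤ Y k ω)
    (hYmeas : ∀ k, Measurable[ℱ k] (Y k)) (hYint : ∀ k, Integrable (Y k) μ)
    (hYN1 : Y (N + 1) = Y N)
    (l : ℕ → Ω → ℝ)
    (hlN1 : l (N + 1) = 0)
    (hlN : l N = fun ω => c * v (N + 1) ω)
    (hlrec : ∀ k < N, l k = fun ω =>
      c * v (k + 1) ω + (μ[fun ω' => max (l (k + 1) ω' - Y (k + 1) ω') 0 | ℱ k]) ω)
    (ξ : ℕ → Ω → ℝ)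
    (hξ : ∀ n, ξ n = fun ω => ∑ k ∈ Finset.Icc 1 n, (Y (k - 1) ω - c * v k ω))
    (Tstar : Ω → ℕ)
    (hTstar : ∀ ω, Tstar ω = sInf {k | 1 ≤ k ∧ k ≤ N + 1 ∧ l k ω ≤ Y k ω})
    (hTne : ∀ ω, {k | 1 ≤ k ∧ k ≤ N + 1 ∧ l k ω ≤ Y k ω}.Nonempty)
    (hξTstarint : Integrable (fun ω => ξ (Tstar ω) ω) μ)
    (hl0int : Integrable (l 0) μ) :
    ∫ ω, ξ (Tstar ω) ω ∂μ = -∫ ω, l 0 ω ∂μ := by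
  classical
  -- basic properties of Tstar
  have hTmem : ∀ ω, 1 ≤ Tstar ω ∧ Tstar ω ≤ N + 1 ∧ l (Tstar ω) ω ≤ Y (Tstar ω) ω := by
    intro ω
    have h := Nat.sInf_mem (hTne ω)
    rw [← hTstar ω] at h
    exact h
  -- characterization of {Tstar > k}
  have hSchar : ∀ k, k ≤ N + 1 → ∀ ω,
      (k < Tstar ω ↔ ∀ j, 1 ≤ j → j ≤ k → Y j ω < l j ω) := by
    intro k hk ω
    constructor
    · intro h j h1 hjk
      by_contra hcon
      push_neg at hcon
      have hjmem : j ∈ {m | 1 ≤ m ∧ m ≤ N + 1 ∧ l m ω ≤ Y m ω} := ⟨h1, le_trans hjk hk, hcon⟩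
      have := Nat.sInf_le hjmem
      rw [← hTstar ω] at this
      omega
    · intro h
      by_contra hcon
      push_neg at hcon
      have := (hTmem ω)
      have := h (Tstar ω) this.1 hcon
      have := (hTmem ω).2.2
      linarith
  -- measurability of l
  have hlmeasF : ∀ j, j ≤ N → Measurable[ℱ j] (l j) := by
    intro j hj
    rcases eq_or_lt_of_le hj with h | h
    · subst h; rw [hlN]; exact (hvmeas j).const_mul c
    · rw [hlrec j h]
      exact ((hvmeas j).const_mul c).add stronglyMeasurable_condExp.measurable
  -- integrability of l
  have hlint : ∀ j, j ≤ N → Integrable (l j) μ := by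
    intro j hj
    rcases eq_or_lt_of_le hj with h | h
    · subst h; rw [hlN]; exact (hvint (j + 1)).const_mul c
    · rw [hlrec j h]
      exact ((hvint (j + 1)).const_mul c).add integrable_condExp
  -- measurability of the events {Tstar > k}
  have hSmeas : ∀ k, k ≤ N → MeasurableSet[ℱ k] {ω | k < Tstar ω} := by
    intro k hk
    have hset : {ω | k < Tstar ω} = ⋂ j ∈ Set.Icc 1 k, {ω | Y j ω < l j ω} := by
      ext ω
      simp only [Set.mem_setOf_eq, Set.mem_iInter, Set.mem_Icc]
      rw [hSchar k (by omega) ω]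
      constructor
      · intro h j hj; exact h j hj.1 hj.2
      · intro h j h1 h2; exact h j ⟨h1, h2⟩
    rw [hset]
    refine MeasurableSet.biInter (Set.to_countable _) ?_
    intro j hj
    obtain ⟨hj1, hj2⟩ : 1 ≤ j ∧ j ≤ k := Set.mem_Icc.mp hj
    have hle : ℱ j ≤ ℱ k := ℱ.mono hj2
    exact measurableSet_lt ((hYmeas j).mono hle le_rfl)
      ((hlmeasF j (le_trans hj2 hk)).mono hle le_rfl)
  have hSmeas0 : ∀ k, k ≤ N → MeasurableSet {ω | k < Tstar ω} := fun k hk =>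
    (ℱ.le k) _ (hSmeas k hk)
  -- key step of the backward recursion
  have hstep : ∀ k, k < N →
      (∫ ω in {ω | k < Tstar ω}, (Y k ω - l k ω) ∂μ) =
        (∫ ω in {ω | k < Tstar ω}, (Y k ω - c * v (k + 1) ω) ∂μ) +
          ∫ ω in {ω | k + 1 < Tstar ω}, (Y (k + 1) ω - l (k + 1) ω) ∂μ := by
    intro k hk
    have hSk := hSmeas0 k (le_of_lt hk)
    have hSk1 := hSmeas0 (k + 1) hk
    have hgint : Integrable (fun ω' => max (l (k + 1) ω' - Y (k + 1) ω') 0) μ :=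
      ((hlint (k + 1) hk).sub (hYint (k + 1))).pos_part
    -- split off the conditional expectation
    have h1 : (∫ ω in {ω | k < Tstar ω}, (Y k ω - l k ω) ∂μ) =
        (∫ ω in {ω | k < Tstar ω}, (Y k ω - c * v (k + 1) ω) ∂μ) -
          ∫ ω in {ω | k < Tstar ω},
            (μ[fun ω' => max (l (k + 1) ω' - Y (k + 1) ω') 0 | ℱ k]) ω ∂μ := by
      have hint1 : IntegrableOn (fun ω => Y k ω - c * v (k + 1) ω) {ω | k < Tstar ω} μ :=
        ((hYint k).sub ((hvint (k + 1)).const_mul c)).integrableOn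
      have hint2 : IntegrableOn
          (fun ω => (μ[fun ω' => max (l (k + 1) ω' - Y (k + 1) ω') 0 | ℱ k]) ω)
          {ω | k < Tstar ω} μ := integrable_condExp.integrableOn
      rw [← integral_sub hint1 hint2]
      refine integral_congr_ae (Filter.Eventually.of_forall fun ω => ?_)
      simp only [hlrec k hk]
      ring
    rw [h1, setIntegral_condExp (ℱ.le k) hgint (hSmeas k (le_of_lt hk))]
    -- rewrite the positive-part integral as an integral over the smaller event
    have hind : ({ω | k < Tstar ω}).indicator
        (fun ω' => max (l (k + 1) ω' - Y (k + 1) ω') 0) =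
        ({ω | k + 1 < Tstar ω}).indicator (fun ω => l (k + 1) ω - Y (k + 1) ω) := by
      funext ω
      by_cases h1 : k + 1 < Tstar ω
      · have hk1 : k < Tstar ω := by omega
        have hYl : Y (k + 1) ω < l (k + 1) ω :=
          ((hSchar (k + 1) (by omega) ω).mp h1) (k + 1) (by omega) le_rfl
        have hm1 : ω ∈ {ω | k + 1 < Tstar ω} := h1
        have hm2 : ω ∈ {ω | k < Tstar ω} := hk1
        rw [Set.indicator_of_mem hm1, Set.indicator_of_mem hm2,
          max_eq_left (by linarith)]
      · by_cases h2 : k < Tstar ω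
        · have : ¬ (Y (k + 1) ω < l (k + 1) ω) := by
            intro hcon
            apply h1
            rw [hSchar (k + 1) (by omega) ω]
            intro j hj1 hj2
            rcases Nat.lt_or_ge j (k + 1) with hj | hj
            · exact ((hSchar k (by omega) ω).mp h2) j hj1 (by omega)
            · have : j = k + 1 := by omega
              subst this; exact hcon
          push_neg at this
          have hm1 : ω ∉ {ω | k + 1 < Tstar ω} := h1
          have hm2 : ω ∈ {ω | k < Tstar ω} := h2
          rw [Set.indicator_of_mem hm2, Set.indicator_of_notMem hm1,
            max_eq_right (by linarith)]
        · have hm1 : ω ∉ {ω | k + 1 < Tstar ω} := h1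
          have hm2 : ω ∉ {ω | k < Tstar ω} := h2
          rw [Set.indicator_of_notMem hm1, Set.indicator_of_notMem hm2]
    have h2 : (∫ ω in {ω | k < Tstar ω}, max (l (k + 1) ω - Y (k + 1) ω) 0 ∂μ) =
        ∫ ω in {ω | k + 1 < Tstar ω}, (l (k + 1) ω - Y (k + 1) ω) ∂μ := by
      rw [← integral_indicator hSk, ← integral_indicator hSk1, hind]
    rw [h2]
    have h3 : (∫ ω in {ω | k + 1 < Tstar ω}, (l (k + 1) ω - Y (k + 1) ω) ∂μ) =
        - ∫ ω in {ω | k + 1 < Tstar ω}, (Y (k + 1) ω - l (k + 1) ω) ∂μ := by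
      rw [← integral_neg]
      congr 1; ext ω; ring
    rw [h3]
    ring
  -- backward induction
  have hmain : ∀ d, d ≤ N →
      (∫ ω in {ω | (N - d) < Tstar ω}, (Y (N - d) ω - l (N - d) ω) ∂μ) =
        ∑ j ∈ Finset.Icc (N - d) N,
          ∫ ω in {ω | j < Tstar ω}, (Y j ω - c * v (j + 1) ω) ∂μ := by
    intro d
    induction d with
    | zero =>
      intro _
      simp only [Nat.sub_zero, Finset.Icc_self, Finset.sum_singleton]
      rw [hlN]
    | succ d ih =>
      intro hd
      have hk : N - (d + 1) < N := by omega
      have hk1 : N - (d + 1) + 1 = N - d := by omega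
      have hIcc : Finset.Icc (N - (d + 1)) N =
          insert (N - (d + 1)) (Finset.Icc (N - (d + 1) + 1) N) := by
        ext x; simp only [Finset.mem_Icc, Finset.mem_insert]; omega
      rw [hstep (N - (d + 1)) hk, hIcc, Finset.sum_insert (by simp), hk1,
        ih (by omega)]
  have hfinal := hmain N le_rfl
  simp only [Nat.sub_self] at hfinal
  -- evaluate the left-hand side of hfinal
  have hS0 : {ω | 0 < Tstar ω} = Set.univ := by
    ext ω; simp only [Set.mem_setOf_eq, Set.mem_univ, iff_true]
    exact lt_of_lt_of_le Nat.zero_lt_one (hTmem ω).1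
  rw [hS0, Measure.restrict_univ] at hfinal
  have hA0 : (∫ ω, (Y 0 ω - l 0 ω) ∂μ) = - ∫ ω, l 0 ω ∂μ := by
    rw [← integral_neg]
    congr 1; ext ω; rw [hY0]; simp
  rw [hA0] at hfinal
  -- rewrite ξ (Tstar ω) ω as a sum of indicators
  have hxi : ∀ ω, ξ (Tstar ω) ω = ∑ j ∈ Finset.range (N + 1),
      ({ω | j < Tstar ω}).indicator (fun ω => Y j ω - c * v (j + 1) ω) ω := by
    intro ω
    simp only [hξ]
    have hT := hTmem ω
    have h1 : Finset.Icc 1 (Tstar ω) = Finset.Ico 1 (Tstar ω + 1) := by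
      ext x; simp only [Finset.mem_Icc, Finset.mem_Ico]; omega
    rw [h1, Finset.sum_Ico_eq_sum_range]
    have h2 : ∀ j ∈ Finset.range (N + 1),
        ({ω | j < Tstar ω}).indicator (fun ω => Y j ω - c * v (j + 1) ω) ω =
          if j < Tstar ω then Y j ω - c * v (j + 1) ω else 0 := by
      intro j _
      by_cases h : j < Tstar ω
      · have hm : ω ∈ {ω | j < Tstar ω} := h
        rw [Set.indicator_of_mem hm, if_pos h]
      · have hm : ω ∉ {ω | j < Tstar ω} := h
        rw [Set.indicator_of_notMem hm, if_neg h]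
    rw [Finset.sum_congr rfl h2, ← Finset.sum_filter]
    have h3 : (Finset.range (N + 1)).filter (fun j => j < Tstar ω) =
        Finset.range (Tstar ω) := by
      ext x
      simp only [Finset.mem_filter, Finset.mem_range]
      omega
    rw [h3]
    have h4 : Tstar ω + 1 - 1 = Tstar ω := by omega
    rw [h4]
    refine Finset.sum_congr rfl fun i _ => ?_
    have : 1 + i - 1 = i := by omega
    rw [this, Nat.add_comm 1 i]
  have hlhs : (∫ ω, ξ (Tstar ω) ω ∂μ) = ∑ j ∈ Finset.range (N + 1),
      ∫ ω in {ω | j < Tstar ω}, (Y j ω - c * v (j + 1) ω) ∂μ := by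
    calc (∫ ω, ξ (Tstar ω) ω ∂μ) = ∫ ω, (∑ j ∈ Finset.range (N + 1),
        ({ω | j < Tstar ω}).indicator (fun ω => Y j ω - c * v (j + 1) ω) ω) ∂μ := by
          exact integral_congr_ae (Filter.Eventually.of_forall hxi)
      _ = ∑ j ∈ Finset.range (N + 1), ∫ ω,
          ({ω | j < Tstar ω}).indicator (fun ω => Y j ω - c * v (j + 1) ω) ω ∂μ := by
          refine integral_finset_sum _ fun j hj => ?_
          have hjN : j ≤ N := by simp at hj; omega
          exact ((hYint j).sub ((hvint (j + 1)).const_mul c)).indicator (hSmeas0 j hjN)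
      _ = ∑ j ∈ Finset.range (N + 1), ∫ ω in {ω | j < Tstar ω},
          (Y j ω - c * v (j + 1) ω) ∂μ := by
          refine Finset.sum_congr rfl fun j hj => ?_
          have hjN : j ≤ N := by simp at hj; omega
          rw [integral_indicator (hSmeas0 j hjN)]
  rw [hlhs]
  rw [show Finset.range (N + 1) = Finset.Icc 0 N by ext x; simp]
  exact hfinal.symm
end

section
/- If (Y_k, X_k), 0 ≤ k ≤ N, is a (two-dimensional) Markov process under the finite measure μ (i.e., conditional measure expectations given 𝔉_k of functions of (Y_{k+1}, X_{k+1}) depend only on (Y_k, X_k)), and the weights satisfy w_{k+1} = w_{k+1}(Y_k) and v_{k+1} = v_{k+1}(Y_k), then the recursively defined control limits satisfy l_k(c) = c v_{k+1}(Y_k) + ME([l_{k+1}(c) − (Y_k + w_{k+1}(Y_k))Λ_{k+1}]^+ | Y_k, X_k) μ-a.e., i.e., l_k(c) is a measurable function of (c, Y_k, X_k) only. -/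
open MeasureTheory Finset

open Filter Topology in
/-- Doob–Dynkin factorization for real-valued functions: a function measurable with
respect to `comap φ` factors as a measurable function of `φ`. -/
lemma measurable_comap_factor {Ω B : Type*} [MeasurableSpace B] (φ : Ω → B) (f : Ω → ℝ)
    (hf : Measurable[MeasurableSpace.comap φ inferInstance] f) :
    ∃ g : B → ℝ, Measurable g ∧ f = g ∘ φ := by
  classical
  letI m : MeasurableSpace Ω := MeasurableSpace.comap φ inferInstance
  have hsf : StronglyMeasurable[m] f := hf.stronglyMeasurable
  -- each m-simple function factors through φ
  have hsimple : ∀ s : @MeasureTheory.SimpleFunc Ω m ℝ,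
      ∃ g : B → ℝ, Measurable g ∧ ⇑s = g ∘ φ := by
    intro s
    refine @MeasureTheory.SimpleFunc.induction Ω ℝ m _
      (fun s => ∃ g : B → ℝ, Measurable g ∧ ⇑s = g ∘ φ) ?_ ?_ s
    · intro c t ht
      obtain ⟨t', ht', rfl⟩ := ht
      refine ⟨fun b => if b ∈ t' then c else 0, Measurable.ite ht' measurable_const
        measurable_const, ?_⟩
      funext ω
      show Set.piecewise (φ ⁻¹' t') (fun _ => c) (fun _ => 0) ω = _
      simp [MeasureTheory.SimpleFunc.coe_piecewise, Set.piecewise, Set.indicator,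
        Set.mem_preimage, Function.comp]
    · rintro s₁ s₂ _ ⟨g₁, hg₁, hfg₁⟩ ⟨g₂, hg₂, hfg₂⟩
      refine ⟨fun b => g₁ b + g₂ b, hg₁.add hg₂, ?_⟩
      funext ω
      simp [hfg₁, hfg₂, Function.comp]
  choose gs hgs hgse using fun n => hsimple (hsf.approx n)
  have htend : ∀ ω, Tendsto (fun n => gs n (φ ω)) atTop (𝓝 (f ω)) := by
    intro ω
    have := hsf.tendsto_approx ω
    convert this using 2 with n
    rw [hgse n]; rfl
  set A : Set B := {b | ∃ c, Tendsto (fun n => gs n b) atTop (𝓝 c)} with hA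
  have hAmeas : MeasurableSet A := measurableSet_exists_tendsto hgs
  set h : ℕ → B → ℝ := fun n b => if b ∈ A then gs n b else 0 with hh
  have hhmeas : ∀ n, Measurable (h n) := fun n =>
    Measurable.ite hAmeas (hgs n) measurable_const
  set g : B → ℝ := fun b => limUnder atTop (fun n => h n b) with hg
  have hconv : ∀ b, Tendsto (fun n => h n b) atTop (𝓝 (g b)) := by
    intro b
    by_cases hb : b ∈ A
    · obtain ⟨c, hc⟩ := hb
      have hb' : b ∈ A := ⟨c, hc⟩
      have hc' : Tendsto (fun n => h n b) atTop (𝓝 c) := by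
        simpa [hh, hb'] using hc
      show Tendsto (fun n => h n b) atTop (𝓝 (limUnder atTop fun n => h n b))
      rw [hc'.limUnder_eq]; exact hc'
    · have hc' : Tendsto (fun n => h n b) atTop (𝓝 0) := by
        simp only [hh, hb, if_false]
        exact tendsto_const_nhds
      show Tendsto (fun n => h n b) atTop (𝓝 (limUnder atTop fun n => h n b))
      rw [hc'.limUnder_eq]; exact hc'
  refine ⟨g, measurable_of_tendsto_metrizable hhmeas
    (tendsto_pi_nhds.mpr hconv), ?_⟩
  funext ω
  have hmem : φ ω ∈ A := ⟨f ω, htend ω⟩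
  have h1 : Tendsto (fun n => h n (φ ω)) atTop (𝓝 (f ω)) := by
    simpa [hh, hmem] using htend ω
  exact tendsto_nhds_unique h1 (hconv (φ ω))

/-- If `(Y_k, X_k)` is a Markov pair process under the finite measure `μ` and the
weights are functions of `Y_k` only, then the recursively defined control limits
satisfy `l_k(c) = c v_{k+1}(Y_k) + ME([l_{k+1}(c) − (Y_k + w_{k+1}(Y_k))Λ_{k+1}]⁺ | Y_k, X_k)`
μ-a.e., and `l_k(c)` is a measurable function of `(Y_k, X_k)` only. -/
theorem stmt_14 {Ω E : Type*} {m0 : MeasurableSpace Ω} [MeasurableSpace E]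
    (μ : Measure Ω) [IsFiniteMeasure μ]
    (N : ℕ) (ℱ : MeasureTheory.Filtration ℕ m0)
    (X : ℕ → Ω → E) (hX : ∀ k, Measurable[ℱ k] (X k))
    (Y Λ : ℕ → Ω → ℝ) (w v : ℕ → ℝ → ℝ) (c : ℝ)
    (hw : ∀ k, Measurable (w k)) (hv : ∀ k, Measurable (v k))
    (hYrec : ∀ k, Y (k + 1) = fun ω => (Y k ω + w (k + 1) (Y k ω)) * Λ (k + 1) ω)
    (hYmeas : ∀ k, Measurable[ℱ k] (Y k))
    (hΛmeas : ∀ k, Measurable[ℱ k] (Λ k))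
    (l : ℕ → Ω → ℝ)
    (hlN1 : l (N + 1) = 0)
    (hlN : l N = fun ω => c * v (N + 1) (Y N ω))
    (hlrec : ∀ k < N, l k = fun ω =>
      c * v (k + 1) (Y k ω) +
        (μ[fun ω' => max (l (k + 1) ω' - Y (k + 1) ω') 0 | ℱ k]) ω)
    (hMarkov : ∀ k ≤ N, ∀ f : ℝ × E → ℝ, Measurable f →
      Integrable (fun ω => f (Y (k + 1) ω, X (k + 1) ω)) μ →
      μ[fun ω => f (Y (k + 1) ω, X (k + 1) ω) | ℱ k] =ᵐ[μ]
        μ[fun ω => f (Y (k + 1) ω, X (k + 1) ω) |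
          MeasurableSpace.comap (fun ω => (Y k ω, X k ω)) inferInstance]) :
    (∀ k < N, l k =ᵐ[μ] fun ω =>
        c * v (k + 1) (Y k ω) +
          (μ[fun ω' => max (l (k + 1) ω' - (Y k ω' + w (k + 1) (Y k ω')) * Λ (k + 1) ω') 0 |
            MeasurableSpace.comap (fun ω => (Y k ω, X k ω)) inferInstance]) ω) ∧
      (∀ k ≤ N, ∃ g : ℝ × E → ℝ, Measurable g ∧
        l k =ᵐ[μ] fun ω => g (Y k ω, X k ω)) := by
  classical
  set φ : ℕ → Ω → ℝ × E := fun k ω => (Y k ω, X k ω) with hφ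
  set m : ℕ → MeasurableSpace Ω :=
    fun k => MeasurableSpace.comap (fun ω => (Y k ω, X k ω)) inferInstance with hm
  have hφmeas : ∀ k, Measurable (φ k) := fun k =>
    (((hYmeas k).mono (ℱ.le k) le_rfl)).prodMk ((hX k).mono (ℱ.le k) le_rfl)
  -- key step: if `l (k+1)` factors through `(Y (k+1), X (k+1))`, then the condexp identity holds
  have key : ∀ k < N,
      (∃ g : ℝ × E → ℝ, Measurable g ∧ l (k + 1) =ᵐ[μ] fun ω => g (Y (k + 1) ω, X (k + 1) ω)) →
      l k =ᵐ[μ] fun ω =>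
        c * v (k + 1) (Y k ω) +
          (μ[fun ω' => max (l (k + 1) ω' - (Y k ω' + w (k + 1) (Y k ω')) * Λ (k + 1) ω') 0 |
            m k]) ω := by
    rintro k hk ⟨g, hg, hlg⟩
    set f : ℝ × E → ℝ := fun p => max (g p - p.1) 0 with hf
    have hfm : Measurable f := (hg.sub measurable_fst).max measurable_const
    have heq : (fun ω' => max (l (k + 1) ω' - Y (k + 1) ω') 0)
        =ᵐ[μ] fun ω' => f (Y (k + 1) ω', X (k + 1) ω') := by
      filter_upwards [hlg] with ω hω
      simp [hf, hω]
    have heq2 : (fun ω' => max (l (k + 1) ω' - Y (k + 1) ω') 0)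
        = fun ω' => max (l (k + 1) ω' - (Y k ω' + w (k + 1) (Y k ω')) * Λ (k + 1) ω') 0 := by
      funext ω'
      rw [hYrec k]
    have hcond : μ[fun ω' => max (l (k + 1) ω' - Y (k + 1) ω') 0 | ℱ k]
        =ᵐ[μ] μ[fun ω' => max (l (k + 1) ω' - Y (k + 1) ω') 0 | m k] := by
      refine (condExp_congr_ae heq).trans (.trans ?_ (condExp_congr_ae heq.symm))
      by_cases hint : Integrable (fun ω => f (Y (k + 1) ω, X (k + 1) ω)) μ
      · exact hMarkov k hk.le f hfm hint
      · rw [condExp_of_not_integrable hint, condExp_of_not_integrable hint]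
    rw [hlrec k hk]
    filter_upwards [hcond] with ω hω
    rw [← heq2, hω]
  -- part 2 by downward induction
  have part2 : ∀ d k, k + d = N → ∃ g : ℝ × E → ℝ, Measurable g ∧
      l k =ᵐ[μ] fun ω => g (Y k ω, X k ω) := by
    intro d
    induction d with
    | zero =>
      intro k hkN
      simp only [Nat.add_zero] at hkN
      subst hkN
      refine ⟨fun p => c * v (k + 1) p.1, (measurable_const.mul
        ((hv (k + 1)).comp measurable_fst)), ?_⟩
      rw [hlN]
    | succ d ih =>
      intro k hkN
      have hk : k < N := by omega
      have hg1 := ih (k + 1) (by omega)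
      have hkey := key k hk hg1
      -- the conditional expectation is `m k`-measurable, hence factors through `φ k`
      have hmeas : Measurable[m k]
          (μ[fun ω' => max (l (k + 1) ω' - (Y k ω' + w (k + 1) (Y k ω')) * Λ (k + 1) ω') 0 |
            m k]) :=
        stronglyMeasurable_condExp.measurable
      obtain ⟨h, hh, hfact⟩ := measurable_comap_factor (fun ω => (Y k ω, X k ω)) _ hmeas
      refine ⟨fun p => c * v (k + 1) p.1 + h p,
        (measurable_const.mul ((hv (k + 1)).comp measurable_fst)).add hh, ?_⟩
      filter_upwards [hkey] with ω hω
      rw [hω]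
      simp only [hfact, Function.comp]
  have part2' : ∀ k ≤ N, ∃ g : ℝ × E → ℝ, Measurable g ∧
      l k =ᵐ[μ] fun ω => g (Y k ω, X k ω) := fun k hk => part2 (N - k) k (by omega)
  exact ⟨fun k hk => key k hk (part2' (k + 1) hk), part2'⟩
end
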